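/- (Proposition 2) Assume B is bounded, strictly positive (B(x) > 0 for all x ≥ 0), and that Hypothesis 2.1 holds. Then (S*, 0) is globally attracting for the disease-free system (9) on Ω = {(S,R) ∈ ℝ²₊ : S > 0}: every solution of (9) with S(0) > 0 and R(0) ≥ 0 satisfies lim_{t→∞}(S(t), R(t)) = (S*, 0). -/

import Mathlib

set_option maxHeartbeats 1000000

open Filter

lemma my_unif_sub (f : ℝ → ℝ) (s : Set ℝ) (hs : IsCompact s) (hf : ContinuousOn f s)
    (a b : ℕ → ℝ) (ha : ∀ᶠ t in atTop, a t ∈ s) (hb : ∀ᶠ t in atTop, b t ∈ s)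
    (hab : Tendsto (fun t => a t - b t) atTop (nhds 0)) :
    Tendsto (fun t => f (a t) - f (b t)) atTop (nhds 0) := by
  have huc := hs.uniformContinuousOn_of_continuous hf
  rw [Metric.uniformContinuousOn_iff] at huc
  rw [Metric.tendsto_atTop] at hab ⊢
  intro ε hε
  obtain ⟨d, hd, hduc⟩ := huc ε hε
  obtain ⟨T1, hT1⟩ := hab d hd
  rw [eventually_atTop] at ha hb
  obtain ⟨T2, hT2⟩ := ha
  obtain ⟨T3, hT3⟩ := hb
  refine ⟨max T1 (max T2 T3), fun t ht => ?_⟩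
  have h1 : dist (a t) (b t) < d := by
    have := hT1 t (le_trans (le_max_left _ _) ht)
    simpa [Real.dist_eq, sub_zero] using this
  have := hduc (a t) (hT2 t (le_trans (le_trans (le_max_left _ _) (le_max_right _ _)) ht))
    (b t) (hT3 t (le_trans (le_trans (le_max_right _ _) (le_max_right _ _)) ht)) h1
  simpa [Real.dist_eq, sub_zero] using this

/-- Proposition 2: under Hypothesis 2.1, with `B` bounded and strictly
positive, the equilibrium `(S*, 0)` of the disease-free system (9) attracts every
solution with `S(0) > 0`, `R(0) ≥ 0`. -/
theorem disease_free_system_GAS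
    (σS σR γR : ℝ)
    (hσS : σS ∈ Set.Ioo (0:ℝ) 1) (hσR : σR ∈ Set.Ioo (0:ℝ) 1)
    (hγR : γR ∈ Set.Ioo (0:ℝ) 1)
    (B : ℝ → ℝ)
    (hBC1 : ContDiffOn ℝ 1 B (Set.Ici (0:ℝ)))
    (hBpos : ∀ x ∈ Set.Ici (0:ℝ), 0 < B x)
    (Bhat : ℝ) (hBbd : ∀ x ∈ Set.Ici (0:ℝ), B x ≤ Bhat)
    -- Hypothesis 2.1 for the scalar map Σ(S) = B(S) + σS·S :
    (Sstar : ℝ) (hSstar_pos : 0 < Sstar)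
    (hfix : B Sstar + σS * Sstar = Sstar)
    (huniq : ∀ x, 0 < x → B x + σS * x = x → x = Sstar)
    (B' : ℝ) (hB' : HasDerivAt B B' Sstar) (hhyperbolic : |B' + σS| < 1)
    (hscalarGAS : ∀ S0, 0 < S0 →
      Filter.Tendsto (fun t => (fun s => B s + σS * s)^[t] S0) Filter.atTop (nhds Sstar))
    -- a solution of the disease-free system (9):
    (S R : ℕ → ℝ) (hS0 : 0 < S 0) (hR0 : 0 ≤ R 0)
    (hdynS : ∀ t, S (t+1) = B (S t + R t) + σS * γR * R t + σS * S t)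
    (hdynR : ∀ t, R (t+1) = σR * (1 - γR) * R t) :
    Filter.Tendsto S Filter.atTop (nhds Sstar) ∧
    Filter.Tendsto R Filter.atTop (nhds 0) := by
  obtain ⟨hσS0, hσS1⟩ := hσS
  obtain ⟨hσR0, hσR1⟩ := hσR
  obtain ⟨hγR0, hγR1⟩ := hγR
  set Sig : ℝ → ℝ := fun s => B s + σS * s with hSigdef
  have hSigfix : Sig Sstar = Sstar := hfix
  -- R basics
  set q : ℝ := σR * (1 - γR) with hqdef
  have hq0 : 0 ≤ q := mul_nonneg hσR0.le (by linarith)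
  have hq1 : q < 1 := by
    calc q ≤ σR * 1 := by apply mul_le_mul_of_nonneg_left (by linarith) hσR0.le
    _ < 1 := by linarith
  have hRform : ∀ t, R t = q ^ t * R 0 := by
    intro t
    induction t with
    | zero => simp
    | succ n ih => rw [hdynR n, ih]; ring
  have hRnn : ∀ t, 0 ≤ R t := fun t => by
    rw [hRform t]; exact mul_nonneg (pow_nonneg hq0 t) hR0
  have hRle : ∀ t, R t ≤ R 0 := fun t => by
    rw [hRform t]
    calc q ^ t * R 0 ≤ 1 * R 0 :=
      mul_le_mul_of_nonneg_right (pow_le_one₀ hq0 hq1.le) hR0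
    _ = R 0 := one_mul _
  have hRtend : Tendsto R atTop (nhds 0) := by
    have := (tendsto_pow_atTop_nhds_zero_of_lt_one hq0 hq1).mul_const (R 0)
    rw [zero_mul] at this
    exact this.congr fun t => (hRform t).symm
  -- bounds on S
  have hBhat0 : 0 < Bhat := lt_of_lt_of_le (hBpos 0 (Set.mem_Ici.mpr le_rfl)) (hBbd 0 (Set.mem_Ici.mpr le_rfl))
  have h1σ : 0 < 1 - σS := by linarith
  set M : ℝ := max (S 0) ((Bhat + σS * γR * R 0) / (1 - σS)) with hMdef
  have hM0 : 0 < M := lt_of_lt_of_le hS0 (le_max_left _ _)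
  have hMge : Bhat + σS * γR * R 0 ≤ (1 - σS) * M := by
    have h := le_max_right (S 0) ((Bhat + σS * γR * R 0) / (1 - σS))
    rw [div_le_iff₀ h1σ] at h
    linarith [h]
  have hSpos : ∀ t, 0 < S t := by
    intro t
    induction t with
    | zero => exact hS0
    | succ n ih =>
      rw [hdynS n]
      have h1 : 0 < B (S n + R n) := hBpos _ (add_nonneg ih.le (hRnn n))
      have h2 : 0 ≤ σS * γR * R n := mul_nonneg (mul_nonneg hσS0.le hγR0.le) (hRnn n)
      nlinarith
  have hSle : ∀ t, S t ≤ M := by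
    intro t
    induction t with
    | zero => exact le_max_left _ _
    | succ n ih =>
      rw [hdynS n]
      have h1 : B (S n + R n) ≤ Bhat := hBbd _ (add_nonneg (hSpos n).le (hRnn n))
      have h2 : σS * γR * R n ≤ σS * γR * R 0 :=
        mul_le_mul_of_nonneg_left (hRle n) (by positivity)
      have h3 : σS * S n ≤ σS * M := mul_le_mul_of_nonneg_left ih hσS0.le
      nlinarith
  -- compact set C and min of B
  set C : Set ℝ := Set.Icc 0 (M + R 0) with hCdef
  have hCc : IsCompact C := isCompact_Icc
  have hCsub : C ⊆ Set.Ici (0:ℝ) := fun x hx => hx.1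
  have hBcontC : ContinuousOn B C := (hBC1.continuousOn).mono hCsub
  have h0C : (0:ℝ) ∈ C := ⟨le_rfl, by linarith [hM0, hR0]⟩
  obtain ⟨x0, hx0C, hx0min⟩ := hCc.exists_isMinOn ⟨0, h0C⟩ hBcontC
  set m : ℝ := B x0 with hmdef
  have hm0 : 0 < m := hBpos x0 (hCsub hx0C)
  have hmmin : ∀ x ∈ C, m ≤ B x := fun x hx => hx0min hx
  have hmBhat : m ≤ Bhat := le_trans (hmmin 0 h0C) (hBbd 0 (Set.mem_Ici.mpr le_rfl))
  have hmM : m ≤ M := by nlinarith [mul_nonneg (mul_nonneg hσS0.le hγR0.le) hR0]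
  set K : Set ℝ := Set.Icc m M with hKdef
  have hKC : K ⊆ C := fun x hx => ⟨le_trans hm0.le hx.1, by linarith [hx.2]⟩
  have hSC : ∀ t, S t ∈ C := fun t => ⟨(hSpos t).le, by linarith [hSle t]⟩
  have hSK1 : ∀ t, S (t+1) ∈ K := by
    intro t
    constructor
    · rw [hdynS t]
      have h1 : m ≤ B (S t + R t) := hmmin _ ⟨add_nonneg (hSpos t).le (hRnn t),
        add_le_add (hSle t) (hRle t)⟩
      nlinarith [mul_nonneg (mul_nonneg hσS0.le hγR0.le) (hRnn t), mul_nonneg hσS0.le (hSpos t).le]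
    · exact hSle (t+1)
  -- Sigma maps K to K
  have hSigK : ∀ x ∈ K, Sig x ∈ K := by
    intro x hx
    have hxC : x ∈ C := hKC hx
    constructor
    · have := hmmin x hxC
      have : 0 ≤ σS * x := mul_nonneg hσS0.le (le_trans hm0.le hx.1)
      simp only [hSigdef]
      nlinarith [hmmin x hxC]
    · have h1 : B x ≤ Bhat := hBbd x (hCsub hxC)
      simp only [hSigdef]
      nlinarith [hx.2, mul_nonneg (mul_nonneg hσS0.le hγR0.le) hR0]
  -- globally continuous extension F of Sig
  set F : ℝ → ℝ := fun s => B (max s 0) + σS * s with hFdef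
  have hFSig : ∀ s, 0 ≤ s → F s = Sig s := by
    intro s hs; simp only [hFdef, hSigdef, max_eq_left hs]
  have hFcont : Continuous F := by
    have h1 : Continuous fun s : ℝ => B (max s 0) := by
      have := hBC1.continuousOn.comp_continuous
        (continuous_id.max continuous_const) (fun x => Set.mem_Ici.mpr (le_max_right _ _))
      exact this
    exact h1.add (continuous_const.mul continuous_id)
  have hiter : ∀ x ∈ K, ∀ n, Sig^[n] x ∈ K ∧ F^[n] x = Sig^[n] x := by
    intro x hx n
    induction n with
    | zero => exact ⟨hx, rfl⟩
    | succ k ih =>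
      rw [Function.iterate_succ_apply', Function.iterate_succ_apply', ih.2]
      refine ⟨hSigK _ ih.1, hFSig _ (le_trans hm0.le ih.1.1)⟩
  have hFK : ∀ x ∈ K, ∀ n, F^[n] x ∈ K := fun x hx n => (hiter x hx n).2 ▸ (hiter x hx n).1
  -- local contraction near Sstar
  set c : ℝ := B' + σS with hcdef
  have hSigd : HasDerivAt Sig c Sstar := by
    have h2 : HasDerivAt (fun s : ℝ => σS * s) σS Sstar := by
      simpa using (hasDerivAt_id Sstar).const_mul σS
    exact hB'.add h2
  set lam : ℝ := (|c| + 1) / 2 with hlamdef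
  have habs : 0 ≤ |c| := abs_nonneg c
  have hlamc : |c| < lam := by rw [hlamdef]; linarith [hhyperbolic]
  have hlam1 : lam < 1 := by rw [hlamdef]; linarith [hhyperbolic]
  have hlam0 : 0 ≤ lam := le_trans habs hlamc.le
  have hlittle := (hasDerivAt_iff_isLittleO.mp hSigd).def (show (0:ℝ) < (1 - |c|)/2 by linarith)
  rw [Metric.eventually_nhds_iff] at hlittle
  obtain ⟨δ, hδ0, hδ⟩ := hlittle
  set δ0 : ℝ := min δ Sstar with hδ0def
  have hδ00 : 0 < δ0 := lt_min hδ0 hSstar_pos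
  have hδ0S : δ0 ≤ Sstar := min_le_right _ _
  have hcontr : ∀ x, |x - Sstar| < δ0 → |Sig x - Sstar| ≤ lam * |x - Sstar| := by
    intro x hx
    have hd : dist x Sstar < δ := by
      rw [Real.dist_eq]; exact lt_of_lt_of_le hx (min_le_left _ _)
    have h := hδ hd
    rw [hSigfix] at h
    simp only [Real.norm_eq_abs, smul_eq_mul] at h
    have h2 : |Sig x - Sstar| ≤ |Sig x - Sstar - (x - Sstar) * c| + |(x - Sstar) * c| := by
      calc |Sig x - Sstar| = |(Sig x - Sstar - (x - Sstar) * c) + (x - Sstar) * c| := by ring_nf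
      _ ≤ _ := abs_add_le _ _
    rw [abs_mul] at h2
    calc |Sig x - Sstar| ≤ (1 - |c|)/2 * |x - Sstar| + |x - Sstar| * |c| := by linarith
    _ = lam * |x - Sstar| := by rw [hlamdef]; ring
  -- positivity inside the ball, ball invariance for F-iterates
  have hballpos : ∀ z : ℝ, |z - Sstar| < δ0 → 0 < z := by
    intro z hz
    have := abs_lt.mp hz
    linarith [this.1]
  have hballiter : ∀ z : ℝ, |z - Sstar| < δ0 → ∀ k, |F^[k] z - Sstar| ≤ |z - Sstar| := by
    intro z hz k
    induction k with
    | zero => simp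
    | succ n ih =>
      rw [Function.iterate_succ_apply']
      set w := F^[n] z with hwdef
      have hw : |w - Sstar| < δ0 := lt_of_le_of_lt ih hz
      have hwpos : 0 < w := hballpos w hw
      rw [hFSig w hwpos.le]
      calc |Sig w - Sstar| ≤ lam * |w - Sstar| := hcontr w hw
      _ ≤ 1 * |w - Sstar| := mul_le_mul_of_nonneg_right hlam1.le (abs_nonneg _)
      _ = |w - Sstar| := one_mul _
      _ ≤ |z - Sstar| := ih
  -- uniform attraction time on K, via compactness
  have hKcomp : IsCompact K := isCompact_Icc
  set U : ℕ → Set ℝ := fun N => {y : ℝ | |F^[N] y - Sstar| < δ0/2} with hUdef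
  have hUopen : ∀ N, IsOpen (U N) := by
    intro N
    have : Continuous fun y : ℝ => |F^[N] y - Sstar| :=
      continuous_abs.comp ((hFcont.iterate N).sub continuous_const)
    exact isOpen_lt this continuous_const
  have hUcov : K ⊆ ⋃ N, U N := by
    intro x hx
    have hx0 : 0 < x := lt_of_lt_of_le hm0 hx.1
    have := Metric.tendsto_atTop.mp (hscalarGAS x hx0) (δ0/2) (by linarith)
    obtain ⟨N, hN⟩ := this
    refine Set.mem_iUnion.mpr ⟨N, ?_⟩
    have := hN N le_rfl
    rw [Real.dist_eq] at this
    simp only [hUdef, Set.mem_setOf_eq, (hiter x hx N).2]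
    exact this
  obtain ⟨T, hT⟩ := hKcomp.elim_finite_subcover U hUopen hUcov
  set Nst : ℕ := T.sup id with hNstdef
  have hNstar : ∀ y ∈ K, |F^[Nst] y - Sstar| < δ0/2 := by
    intro y hy
    obtain ⟨N, hNT, hyU⟩ := Set.mem_iUnion₂.mp (hT hy)
    have hNle : N ≤ Nst := Finset.le_sup (f := id) hNT
    have heq : F^[Nst] y = F^[Nst - N] (F^[N] y) := by
      rw [← Function.iterate_add_apply, Nat.sub_add_cancel hNle]
    rw [heq]
    have hz : |F^[N] y - Sstar| < δ0/2 := hyU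
    calc |F^[Nst - N] (F^[N] y) - Sstar| ≤ |F^[N] y - Sstar| :=
      hballiter _ (by linarith) _
    _ < δ0/2 := hz
  -- error tends to 0
  have hSmemK : ∀ᶠ t in atTop, S t ∈ K := by
    rw [eventually_atTop]
    refine ⟨1, fun t ht => ?_⟩
    obtain ⟨s, rfl⟩ := Nat.exists_eq_add_of_le ht
    simpa [Nat.add_comm] using hSK1 s
  have hE : Tendsto (fun t => S (t+1) - F (S t)) atTop (nhds 0) := by
    have h1 : Tendsto (fun t => B (S t + R t) - B (S t)) atTop (nhds 0) := by
      refine my_unif_sub B C hCc hBcontC _ _ ?_ ?_ ?_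
      · exact Eventually.of_forall fun t => ⟨add_nonneg (hSpos t).le (hRnn t),
          add_le_add (hSle t) (hRle t)⟩
      · exact Eventually.of_forall hSC
      · simpa using hRtend
    have h2 : Tendsto (fun t => σS * γR * R t) atTop (nhds 0) := by
      simpa using hRtend.const_mul (σS * γR)
    have h3 := h1.add h2
    rw [add_zero] at h3
    refine h3.congr fun t => ?_
    rw [hdynS t, hFSig _ (hSpos t).le]
    simp only [hSigdef]
    ring
  -- finite-horizon shadowing
  have hshadow : ∀ k, Tendsto (fun t => S (t+k) - F^[k] (S t)) atTop (nhds 0) := by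
    intro k
    induction k with
    | zero => simpa using tendsto_const_nhds
    | succ k ih =>
      have hA : Tendsto (fun t => S (t+k+1) - F (S (t+k))) atTop (nhds 0) :=
        hE.comp (tendsto_add_atTop_nat k)
      have hBmem : ∀ᶠ t in atTop, S (t+k) ∈ K := (tendsto_add_atTop_nat k).eventually hSmemK
      have hCmem : ∀ᶠ t in atTop, F^[k] (S t) ∈ K := hSmemK.mono fun t ht => hFK _ ht k
      have hB2 : Tendsto (fun t => F (S (t+k)) - F (F^[k] (S t))) atTop (nhds 0) :=
        my_unif_sub F K hKcomp hFcont.continuousOn _ _ hBmem hCmem ih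
      have h3 := hA.add hB2
      rw [add_zero] at h3
      refine h3.congr fun t => ?_
      rw [Function.iterate_succ_apply']
      have : t + (k+1) = t + k + 1 := by omega
      rw [this]
      ring
  -- eventually S t is in the δ0-ball
  have hnear : ∀ᶠ t in atTop, |S t - Sstar| < δ0 := by
    obtain ⟨T1, hT1⟩ := Metric.tendsto_atTop.mp (hshadow Nst) (δ0/2) (by linarith)
    rw [eventually_atTop]
    refine ⟨max T1 1 + Nst, fun s hs => ?_⟩
    obtain ⟨t, ht1, rfl⟩ : ∃ t, max T1 1 ≤ t ∧ s = t + Nst :=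
      ⟨s - Nst, by omega, by omega⟩
    have hd1 : |S (t + Nst) - F^[Nst] (S t)| < δ0/2 := by
      have := hT1 t (le_trans (le_max_left _ _) ht1)
      simpa [Real.dist_eq, sub_zero] using this
    have htK : S t ∈ K := by
      have h1t : 1 ≤ t := le_trans (le_max_right _ _) ht1
      obtain ⟨u, rfl⟩ := Nat.exists_eq_add_of_le h1t
      simpa [Nat.add_comm] using hSK1 u
    have hd2 : |F^[Nst] (S t) - Sstar| < δ0/2 := hNstar _ htK
    have : |S (t + Nst) - Sstar| < δ0 := by
      calc |S (t + Nst) - Sstar|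
          ≤ |S (t + Nst) - F^[Nst] (S t)| + |F^[Nst] (S t) - Sstar| := by
            have := abs_add_le (S (t + Nst) - F^[Nst] (S t)) (F^[Nst] (S t) - Sstar)
            simpa using this
      _ < δ0/2 + δ0/2 := add_lt_add hd1 hd2
      _ = δ0 := by ring
    exact this
  -- conclusion for S
  constructor
  · rw [Metric.tendsto_atTop]
    intro ε hε
    set η : ℝ := (1 - lam) * (ε/2) with hηdef
    have hη0 : 0 < η := mul_pos (by linarith) (by linarith)
    obtain ⟨T4, hT4⟩ := Metric.tendsto_atTop.mp hE η hη0
    obtain ⟨T5, hT5⟩ := eventually_atTop.mp hnear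
    set T6 : ℕ := max T4 T5 with hT6def
    have hkey : ∀ k, |S (T6 + k) - Sstar| ≤ lam ^ k * δ0 + ε/2 := by
      intro k
      induction k with
      | zero =>
        have h := hT5 T6 (le_max_right _ _)
        simp only [pow_zero, one_mul, Nat.add_zero]
        linarith
      | succ k ih =>
        have hball : |S (T6 + k) - Sstar| < δ0 :=
          hT5 _ (le_trans (le_max_right _ _) (Nat.le_add_right _ _))
        have he : |S (T6 + k + 1) - F (S (T6 + k))| < η := by
          have := hT4 (T6 + k) (le_trans (le_max_left _ _) (Nat.le_add_right _ _))
          simpa [Real.dist_eq, sub_zero] using this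
        have hc : |F (S (T6 + k)) - Sstar| ≤ lam * |S (T6 + k) - Sstar| := by
          rw [hFSig _ (hSpos _).le]; exact hcontr _ hball
        have htri : |S (T6 + k + 1) - Sstar| ≤ lam * |S (T6 + k) - Sstar| + η := by
          calc |S (T6+k+1) - Sstar|
              ≤ |S (T6+k+1) - F (S (T6+k))| + |F (S (T6+k)) - Sstar| := by
                have := abs_add_le (S (T6+k+1) - F (S (T6+k))) (F (S (T6+k)) - Sstar)
                simpa using this
          _ ≤ lam * |S (T6+k) - Sstar| + η := by linarith
        have h2 : lam * |S (T6+k) - Sstar| ≤ lam * (lam ^ k * δ0 + ε/2) :=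
          mul_le_mul_of_nonneg_left ih hlam0
        have hη2 : lam * (ε/2) + η ≤ ε/2 := by rw [hηdef]; ring_nf; linarith
        have hstep : T6 + (k+1) = T6 + k + 1 := rfl
        rw [hstep]
        calc |S (T6+k+1) - Sstar| ≤ lam * (lam^k*δ0 + ε/2) + η := by linarith
        _ = lam^(k+1)*δ0 + (lam*(ε/2) + η) := by ring
        _ ≤ lam^(k+1)*δ0 + ε/2 := by linarith
    have hpowt := (tendsto_pow_atTop_nhds_zero_of_lt_one hlam0 hlam1).mul_const δ0
    rw [zero_mul] at hpowt
    obtain ⟨k0, hk0⟩ := Metric.tendsto_atTop.mp hpowt (ε/2) (by linarith)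
    have hk0' : lam ^ k0 * δ0 < ε/2 := by
      have h := hk0 k0 le_rfl
      rw [Real.dist_eq, sub_zero] at h
      exact lt_of_abs_lt h
    refine ⟨T6 + k0, fun t ht => ?_⟩
    have hT6t : T6 ≤ t := by omega
    obtain ⟨k, rfl⟩ := Nat.exists_eq_add_of_le hT6t
    have hkk : k0 ≤ k := by omega
    have hpow : lam ^ k ≤ lam ^ k0 := pow_le_pow_of_le_one hlam0 hlam1.le hkk
    have hmono : lam ^ k * δ0 ≤ lam ^ k0 * δ0 := mul_le_mul_of_nonneg_right hpow hδ00.le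
    rw [Real.dist_eq]
    linarith [hkey k]
  · exact hRtend
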